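/- Let m ∈ ℕ be even and δ ∈ F_{2^{2m}} with Tr_{2m}(δ) = 1. Then f(x) = (x² + x + δ)^{2^m + 1} + x is a 2-to-1 mapping on F_{2^{2m}}. -/

import Mathlib

open Finset

set_option linter.unusedSectionVars false

namespace Stmt10Aux

variable {F : Type*} [Field F] [Fintype F] [DecidableEq F]

lemma charF {m : ℕ} (hcard : Fintype.card F = 2 ^ (2*m)) : CharP F 2 := by
  obtain ⟨p, hp⟩ := CharP.exists F
  obtain ⟨n, hpp, hn⟩ := FiniteField.card F p
  have hdvd : p ∣ 2 ^ (2*m) := by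
    rw [← hcard, hn]; exact dvd_pow_self p n.ne_zero
  have hp2 : p = 2 :=
    (Nat.prime_dvd_prime_iff_eq hpp Nat.prime_two).mp (hpp.dvd_of_dvd_pow hdvd)
  rwa [hp2] at hp

section CharTwo

variable [CharP F 2] (m : ℕ)

lemma frobq (u v : F) : (u+v)^(2^m) = u^(2^m)+v^(2^m) := add_pow_char_pow u v 2 m

lemma h2 : (2 : F) = 0 := CharTwo.two_eq_zero

lemma powpow (hcard : Fintype.card F = 2 ^ (2*m)) (u : F) : (u^(2^m))^(2^m) = u := by
  rw [← pow_mul, ← pow_add, ← two_mul, ← hcard, FiniteField.pow_card]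

/-- partial trace -/
def T (z : F) : F := ∑ i ∈ range m, z^(2^i)

lemma Tadd (u v : F) : T m (u+v) = T m u + T m v := by
  simp only [T, ← Finset.sum_add_distrib]
  exact Finset.sum_congr rfl fun i _ => add_pow_char_pow u v 2 i

lemma Tsq (z : F) : T m (z^2) + z = T m z + z^(2^m) := by
  have h1 : ∀ i : ℕ, (z^2)^(2^i) = z^(2^(i+1)) := by
    intro i; rw [← pow_mul, pow_succ, mul_comm (2^i) 2, pow_mul]
  have hsq : T m (z^2) = ∑ i ∈ range m, z^(2^(i+1)) := Finset.sum_congr rfl fun i _ => h1 i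
  calc T m (z^2) + z = ∑ i ∈ range m, z^(2^(i+1)) + z^(2^0) := by
        rw [hsq, pow_zero, pow_one]
    _ = ∑ k ∈ range (m+1), z^(2^k) := (Finset.sum_range_succ' (fun k => z^(2^k)) m).symm
    _ = T m z + z^(2^m) := Finset.sum_range_succ (fun k => z^(2^k)) m

lemma Tvanish (u : F) (hu : u^(2^m) = u) : T m (u^2 + u) = 0 := by
  rw [Tadd]
  have h := Tsq m u
  rw [hu] at h
  have h' : T m (u^2) = T m u := add_right_cancel h
  rw [h', CharTwo.add_self_eq_zero]

lemma Tone (hmeven : Even m) : T m (1 : F) = 0 := by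
  simp only [T, one_pow, Finset.sum_const, card_range, nsmul_eq_mul, mul_one]
  obtain ⟨k, hk⟩ := hmeven
  have : (m : F) = 2 * k := by rw [hk]; push_cast; ring
  rw [this, CharTwo.two_eq_zero, zero_mul]

lemma Tdelta (δ : F) (htr : ∑ i ∈ Finset.range (2 * m), δ ^ (2 ^ i) = 1) :
    T m (δ^(2^m) + δ) = 1 := by
  rw [Tadd]
  have hsplit : ∑ i ∈ Finset.range (2*m), δ ^ (2^i)
      = ∑ i ∈ range m, δ^(2^i) + ∑ i ∈ range m, δ^(2^(m+i)) := by
    rw [two_mul]; exact Finset.sum_range_add _ m m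
  have h1 : T m (δ^(2^m)) = ∑ i ∈ range m, δ^(2^(m+i)) := by
    refine Finset.sum_congr rfl fun i _ => ?_
    rw [← pow_mul, ← pow_add]
  rw [h1, add_comm, ← htr, hsplit]
  rfl


lemma e3 (δ x : F) : (x^2+x+δ)^(2^m) = (x^(2^m))^2 + x^(2^m) + δ^(2^m) := by
  rw [frobq, frobq, pow_right_comm]

lemma TrNZ1 (δ w : F) (hδ : T m (δ^(2^m)+δ) = 1) (hw : w^(2^m) = w) :
    w^2 + w + (δ^(2^m)+δ) ≠ 0 := by
  have h2 : (2:F) = 0 := CharTwo.two_eq_zero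
  intro h
  have hd : δ^(2^m)+δ = w^2+w := by linear_combination h - (w^2+w)*h2
  rw [hd, Tvanish m w hw] at hδ
  exact one_ne_zero hδ.symm

lemma TrNZ2 (δ w : F) (hmeven : Even m) (hδ : T m (δ^(2^m)+δ) = 1) (hw : w^(2^m) = w) :
    w^2 + w + (δ^(2^m)+δ) ≠ 1 := by
  have h2 : (2:F) = 0 := CharTwo.two_eq_zero
  intro h
  have hd : δ^(2^m)+δ = (w^2+w)+1 := by linear_combination h - (w^2+w)*h2
  rw [hd, Tadd, Tvanish m w hw, Tone m hmeven, zero_add] at hδ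
  exact one_ne_zero hδ.symm

lemma diff_iff (δ : F) (f : F → F)
    (hf : ∀ x, f x = (x ^ 2 + x + δ) ^ (2 ^ m + 1) + x) (x a : F) :
    f (x+a) = f x ↔
      (a^2+a) * (x^2+x+δ)^(2^m) + ((a^2+a)^(2^m)) * (x^2+x+δ)
        + (a^2+a)^(2^m) * (a^2+a) = a := by
  have h2 : (2:F) = 0 := CharTwo.two_eq_zero
  rw [hf, hf]
  have e1 : ((x+a)^2+(x+a)+δ) = (x^2+x+δ) + (a^2+a) := by linear_combination (x*a)*h2
  rw [e1, pow_succ, frobq, pow_succ]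
  constructor <;> intro h
  · linear_combination h - a*h2
  · linear_combination h + a*h2

lemma force (hcard : Fintype.card F = 2 ^ (2*m)) (δ : F) (x a : F)
    (h : (a^2+a) * (x^2+x+δ)^(2^m) + ((a^2+a)^(2^m)) * (x^2+x+δ)
        + (a^2+a)^(2^m) * (a^2+a) = a) : a^(2^m) = a := by
  have pw : ∀ u : F, (u^(2^m))^(2^m) = u := powpow m hcard
  have h5 := congrArg (· ^ (2^m)) h
  rw [← h5, frobq, frobq, mul_pow, mul_pow, mul_pow, pw, pw]
  linear_combination h

lemma key_iff (hcard : Fintype.card F = 2 ^ (2*m)) (hmeven : Even m)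
    (δ : F) (hδ : T m (δ^(2^m)+δ) = 1) (f : F → F)
    (hf : ∀ x, f x = (x ^ 2 + x + δ) ^ (2 ^ m + 1) + x) (x a : F) :
    (a ≠ 0 ∧ f (x+a) = f x) ↔
      ((x^(2^m)+x+a+1)^(2^m) = x^(2^m)+x+a+1 ∧
       (x^(2^m)+x+a+1) +
         ((x^(2^m)+x+a+1)^2 + (x^(2^m)+x+a+1) + (δ^(2^m)+δ))⁻¹ = x^(2^m)+x) := by
  have h2 : (2:F) = 0 := CharTwo.two_eq_zero
  have pw : ∀ u : F, (u^(2^m))^(2^m) = u := powpow m hcard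
  constructor
  · rintro ⟨ha0, hfe⟩
    have h := (diff_iff m δ f hf x a).mp hfe
    have haq : a^(2^m) = a := force m hcard δ x a h
    have hBc : (a^2+a)^(2^m) = a^2+a := by
      rw [frobq, pow_right_comm, haq]
    rw [hBc, e3] at h
    -- h : (a^2+a) * ((x^(2^m))^2 + x^(2^m) + δ^(2^m)) + (a^2+a)*(x^2+x+δ) + (a^2+a)*(a^2+a) = a
    have ha1 : a ≠ 1 := by
      intro h1
      rw [h1] at h
      apply one_ne_zero (α := F)
      linear_combination -h + (((x^(2^m))^2 + x^(2^m) + δ^(2^m)) + (x^2+x+δ) + 2)*h2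
    have hz0 : a + 1 ≠ 0 := by
      intro hz; exact ha1 (by linear_combination hz - h2)
    have hc0 : a^2+a ≠ 0 := by
      have : a^2+a = a*(a+1) := by ring
      rw [this]; exact mul_ne_zero ha0 hz0
    have hw : (x^(2^m)+x+a+1)^(2^m) = x^(2^m)+x+a+1 := by
      rw [frobq, frobq, frobq, one_pow, pw, haq]
      ring
    have huz : ((x^(2^m)+x+a+1)^2 + (x^(2^m)+x+a+1) + (δ^(2^m)+δ)) * (a+1) = 1 := by
      have := mul_left_cancel₀ hc0 (b := ((x^(2^m)+x+a+1)^2 + (x^(2^m)+x+a+1) + (δ^(2^m)+δ)) * (a+1)) (c := 1) ?_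
      · exact this
      · linear_combination (a+1)*h + (a + a*x + a*x*(x^(2^m)) + a*(x^(2^m)) + 3*a^2 + 3*a^2*x + 2*a^2*x*(x^(2^m)) + 3*a^2*(x^(2^m)) + 3*a^3 + 3*a^3*x + a^3*x*(x^(2^m)) + 3*a^3*(x^(2^m)) + a^4 + a^4*x + a^4*(x^(2^m)))*h2
    refine ⟨hw, ?_⟩
    rw [inv_eq_of_mul_eq_one_right huz]
    linear_combination (a+1)*h2
  · rintro ⟨hw, hpsi⟩
    have hu0 : (x^(2^m)+x+a+1)^2 + (x^(2^m)+x+a+1) + (δ^(2^m)+δ) ≠ 0 :=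
      TrNZ1 m δ _ hδ hw
    have hu1 : (x^(2^m)+x+a+1)^2 + (x^(2^m)+x+a+1) + (δ^(2^m)+δ) ≠ 1 :=
      TrNZ2 m δ _ hmeven hδ hw
    have hinv : ((x^(2^m)+x+a+1)^2 + (x^(2^m)+x+a+1) + (δ^(2^m)+δ))⁻¹ = a + 1 := by
      linear_combination hpsi - (a+1)*h2
    have huz : ((x^(2^m)+x+a+1)^2 + (x^(2^m)+x+a+1) + (δ^(2^m)+δ)) * (a+1) = 1 := by
      rw [← hinv]; exact mul_inv_cancel₀ hu0
    have ha0 : a ≠ 0 := by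
      intro h0; apply hu1; rw [h0]; rw [h0] at huz; linear_combination huz
    have haq : a^(2^m) = a := by
      have h5 := hw
      rw [frobq, frobq, frobq, one_pow, pw] at h5
      linear_combination h5
    have hBc : (a^2+a)^(2^m) = a^2+a := by
      rw [frobq, pow_right_comm, haq]
    refine ⟨ha0, (diff_iff m δ f hf x a).mpr ?_⟩
    rw [hBc, e3]
    linear_combination a*huz - (a + a*x + a*x*(x^(2^m)) + a*(x^(2^m)) + 2*a^2 + 2*a^2*x + a^2*x*(x^(2^m)) + 2*a^2*(x^(2^m)) + a^3 + a^3*x + a^3*(x^(2^m)))*h2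
  
lemma unique (hcard : Fintype.card F = 2 ^ (2*m)) (hmeven : Even m)
    (δ : F) (hδ : T m (δ^(2^m)+δ) = 1) (f : F → F)
    (hf : ∀ x, f x = (x ^ 2 + x + δ) ^ (2 ^ m + 1) + x) (x a₁ a₂ : F)
    (ha1 : a₁ ≠ 0) (ha2 : a₂ ≠ 0) (hf1 : f (x+a₁) = f x) (hf2 : f (x+a₂) = f x) :
    a₁ = a₂ := by
  by_contra hne
  have h2 : (2:F) = 0 := CharTwo.two_eq_zero
  have pw : ∀ u : F, (u^(2^m))^(2^m) = u := powpow m hcard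
  have ha3 : a₁ + a₂ ≠ 0 := by
    intro h; exact hne (by linear_combination h - a₂*h2)
  -- polynomial equations
  have h1 := (diff_iff m δ f hf x a₁).mp hf1
  have h2' := (diff_iff m δ f hf x a₂).mp hf2
  have haq1 : a₁^(2^m) = a₁ := force m hcard δ x a₁ h1
  have haq2 : a₂^(2^m) = a₂ := force m hcard δ x a₂ h2'
  have hBc1 : (a₁^2+a₁)^(2^m) = a₁^2+a₁ := by rw [frobq, pow_right_comm, haq1]
  have hBc2 : (a₂^2+a₂)^(2^m) = a₂^2+a₂ := by rw [frobq, pow_right_comm, haq2]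
  rw [hBc1, e3] at h1
  rw [hBc2, e3] at h2'
  -- cubic equations
  have cub1 : a₁^3 + ((x^(2^m))^2 + x^(2^m) + δ^(2^m) + (x^2+x+δ) + 1)*a₁ + ((x^(2^m))^2 + x^(2^m) + δ^(2^m) + (x^2+x+δ) + 1) = 0 := by
    have h9 : a₁ * (a₁^3 + ((x^(2^m))^2 + x^(2^m) + δ^(2^m) + (x^2+x+δ) + 1)*a₁ + ((x^(2^m))^2 + x^(2^m) + δ^(2^m) + (x^2+x+δ) + 1)) = 0 := by
      linear_combination h1 + (a₁ - a₁^3)*h2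
    exact (mul_eq_zero.mp h9).resolve_left ha1
  have cub2 : a₂^3 + ((x^(2^m))^2 + x^(2^m) + δ^(2^m) + (x^2+x+δ) + 1)*a₂ + ((x^(2^m))^2 + x^(2^m) + δ^(2^m) + (x^2+x+δ) + 1) = 0 := by
    have h9 : a₂ * (a₂^3 + ((x^(2^m))^2 + x^(2^m) + δ^(2^m) + (x^2+x+δ) + 1)*a₂ + ((x^(2^m))^2 + x^(2^m) + δ^(2^m) + (x^2+x+δ) + 1)) = 0 := by
      linear_combination h2' + (a₂ - a₂^3)*h2
    exact (mul_eq_zero.mp h9).resolve_left ha2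
  have hi : ((x^(2^m))^2 + x^(2^m) + δ^(2^m) + (x^2+x+δ) + 1) = (a₁+a₂)^2 + a₁*a₂ := by
    have h9 : (a₁+a₂) * ((a₁+a₂)^2 + a₁*a₂ + ((x^(2^m))^2 + x^(2^m) + δ^(2^m) + (x^2+x+δ) + 1)) = 0 := by
      linear_combination cub1 + cub2 + (-1 + 2*a₁*a₂^2 + 2*a₁^2*a₂ - x - x^2 - (x^(2^m)) - (x^(2^m))^2 - δ - δ^(2^m))*h2
    have h10 := (mul_eq_zero.mp h9).resolve_left ha3
    linear_combination h10 + (-(3*a₁*a₂ + a₁^2 + a₂^2))*h2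
  have hii : a₁*a₂*(a₁+a₂+1) = (a₁+a₂)^2 := by
    linear_combination cub1 + (a₁+1)*hi + (-1 - a₁ + a₁*a₂ + a₁*a₂^2 - a₁*x - a₁*x^2 - a₁*(x^(2^m)) - a₁*(x^(2^m))^2 - a₁*δ - a₁*δ^(2^m) + 2*a₁^2*a₂ - x - x^2 - (x^(2^m)) - (x^(2^m))^2 - δ - δ^(2^m))*h2
  have hw0 : a₁+a₂+1 ≠ 0 := by
    intro h
    apply one_ne_zero (α := F)
    linear_combination -hii + (1 - a₁ - a₂ + a₁*a₂)*h
  have hiv : (a₁+a₂)*(a₁+a₂)⁻¹ = 1 := mul_inv_cancel₀ ha3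
  have hpp : ((a₁*(a₁+a₂)⁻¹)^2 + (a₁*(a₁+a₂)⁻¹))*(a₁+a₂+1) = 1 := by
    linear_combination ((a₁+a₂)⁻¹)^2*hii + ((a₁+a₂)*(a₁+a₂)⁻¹+1)*hiv - a₁*(a₁+a₂)⁻¹*(a₁+a₂+1)*hiv + a₁^2*((a₁+a₂)⁻¹)^2*(a₁+a₂+1)*h2
  have hfinal : ((x^(2^m))^2 + x^(2^m) + δ^(2^m) + (x^2+x+δ) + 1) = ((a₁+a₂+1)^2 + (a₁+a₂+1)) + (1 + ((a₁*(a₁+a₂)⁻¹)^2 + (a₁*(a₁+a₂)⁻¹))) := by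
    apply mul_right_cancel₀ hw0
    linear_combination hpp + (a₁+a₂+1)*hi + hii + (-1 - 3*a₁ - 2*a₁*a₂ - a₁*a₂*((a₁+a₂)⁻¹) - a₁*((a₁+a₂)⁻¹) - a₁^2 - a₁^2*a₂*((a₁+a₂)⁻¹)^2 - a₁^2*((a₁+a₂)⁻¹) - a₁^2*((a₁+a₂)⁻¹)^2 - a₁^3*((a₁+a₂)⁻¹)^2 - 3*a₂ - a₂^2)*h2
  -- q-stability
  have hwq : (a₁+a₂+1)^(2^m) = a₁+a₂+1 := by
    rw [frobq, frobq, one_pow, haq1, haq2]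
  have hpq : (a₁*(a₁+a₂)⁻¹)^(2^m) = (a₁*(a₁+a₂)⁻¹) := by
    rw [mul_pow, inv_pow, frobq, haq1, haq2]
  have hrq : (x^(2^m)+x)^(2^m) = x^(2^m)+x := by
    rw [frobq, pw]; ring
  -- trace computations
  have Te0 : T m ((x^(2^m))^2 + x^(2^m) + δ^(2^m) + (x^2+x+δ) + 1) = 0 := by
    rw [hfinal,
      Tadd m ((a₁+a₂+1)^2 + (a₁+a₂+1)) (1 + ((a₁*(a₁+a₂)⁻¹)^2 + (a₁*(a₁+a₂)⁻¹))),
      Tadd m 1 ((a₁*(a₁+a₂)⁻¹)^2 + (a₁*(a₁+a₂)⁻¹)),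
      Tvanish m _ hwq, Tvanish m _ hpq, Tone m hmeven]
    ring
  have Te1 : T m ((x^(2^m))^2 + x^(2^m) + δ^(2^m) + (x^2+x+δ) + 1) = 1 := by
    have herel : ((x^(2^m))^2 + x^(2^m) + δ^(2^m) + (x^2+x+δ) + 1) = ((x^(2^m)+x)^2+(x^(2^m)+x)) + ((δ^(2^m)+δ) + 1) := by
      linear_combination (-(x^(2^m)*x))*h2
    rw [herel,
      Tadd m ((x^(2^m)+x)^2+(x^(2^m)+x)) ((δ^(2^m)+δ) + 1),
      Tadd m (δ^(2^m)+δ) 1,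
      Tvanish m _ hrq, Tone m hmeven, hδ]
    ring
  rw [Te0] at Te1
  exact one_ne_zero Te1.symm

lemma filter_pow_card_le (n : ℕ) (hn : 1 < n) :
    (univ.filter (fun w : F => w^n = w)).card ≤ n := by
  classical
  have hP : ((Polynomial.X:Polynomial F)^n - Polynomial.X) ≠ 0 := by
    intro h
    have := Polynomial.natDegree_sub_eq_left_of_natDegree_lt
      (p := (Polynomial.X:Polynomial F)^n) (q := (Polynomial.X:Polynomial F)) (by simp [hn])
    rw [h] at this; simp at this; omega
  have hsub : (univ.filter (fun w : F => w^n = w)) ⊆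
      ((Polynomial.X:Polynomial F)^n - Polynomial.X).roots.toFinset := by
    intro w hw
    simp only [Multiset.mem_toFinset, Polynomial.mem_roots, hP, ne_eq, not_false_iff, true_and]
    simp only [mem_filter] at hw
    simp [Polynomial.IsRoot, sub_eq_zero, hw.2]
  calc (univ.filter (fun w : F => w^n = w)).card
      ≤ ((Polynomial.X:Polynomial F)^n - Polynomial.X).roots.toFinset.card :=
        Finset.card_le_card hsub
    _ ≤ Multiset.card ((Polynomial.X:Polynomial F)^n - Polynomial.X).roots :=
        Multiset.toFinset_card_le _
    _ ≤ ((Polynomial.X:Polynomial F)^n - Polynomial.X).natDegree := Polynomial.card_roots' _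
    _ = n := by rw [Polynomial.natDegree_sub_eq_left_of_natDegree_lt] <;> simp [hn]

lemma Lfiber_card (hm : 0 < m) (hcard : Fintype.card F = 2 ^ (2*m)) :
    (univ.filter (fun w : F => w^(2^m) = w)).card = 2^m ∧
    ∀ y : F, y^(2^m) = y →
      (univ.filter (fun x : F => x^(2^m)+x = y)).card = 2^m := by
  have h2 : (2:F) = 0 := CharTwo.two_eq_zero
  have pw : ∀ u : F, (u^(2^m))^(2^m) = u := powpow m hcard
  have hq1 : 1 < 2^m := by
    have : (2:ℕ)^1 ≤ 2^m := Nat.pow_le_pow_right (by norm_num) hm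
    omega
  set K := univ.filter (fun w : F => w^(2^m) = w) with hK
  -- the kernel as zero set of L
  have hKZ : ∀ w : F, w^(2^m) + w = 0 ↔ w^(2^m) = w := by
    intro w
    constructor
    · intro h; linear_combination h - w*h2
    · intro h; linear_combination h + w*h2
  -- all fibers of L have the same card
  have hfib : ∀ x₀ : F, (univ.filter (fun x : F => x^(2^m)+x = x₀^(2^m)+x₀)).card = K.card := by
    intro x₀
    apply Finset.card_nbij' (fun x => x + x₀) (fun z => z + x₀)
    · intro x hx
      simp only [Finset.mem_coe, mem_filter, mem_univ, true_and] at hx ⊢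
      rw [hK, mem_filter]
      refine ⟨mem_univ _, ?_⟩
      rw [← hKZ, frobq]
      linear_combination hx + (x₀^(2^m) + x₀)*h2
    · intro z hz
      rw [Finset.mem_coe, hK, mem_filter] at hz
      simp only [Finset.mem_coe, mem_filter, mem_univ, true_and]
      rw [frobq, hz.2]
      linear_combination z*h2
    · intro x _; linear_combination x₀*h2
    · intro z _; linear_combination x₀*h2
  -- partition of F by L
  have himsub : Finset.image (fun x : F => x^(2^m)+x) univ ⊆ K := by
    intro y hy
    rw [Finset.mem_image] at hy
    obtain ⟨x, _, rfl⟩ := hy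
    rw [hK, mem_filter]
    refine ⟨mem_univ _, ?_⟩
    rw [frobq, pw]; ring
  have hpart := Finset.card_eq_sum_card_fiberwise
    (f := fun x : F => x^(2^m)+x) (s := univ) (t := Finset.image (fun x : F => x^(2^m)+x) univ)
    (fun x _ => Finset.mem_image_of_mem _ (mem_univ x))
  have hsum : (univ : Finset F).card
      = (Finset.image (fun x : F => x^(2^m)+x) univ).card * K.card := by
    rw [hpart, Finset.sum_congr rfl (fun y hy => ?_), Finset.sum_const, smul_eq_mul]
    rw [Finset.mem_image] at hy
    obtain ⟨x₀, _, rfl⟩ := hy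
    exact hfib x₀
  have hKle : K.card ≤ 2^m := filter_pow_card_le (2^m) hq1
  have hFcard : (univ : Finset F).card = 2^m * 2^m := by
    rw [Finset.card_univ, hcard, ← pow_add, two_mul]
  have himle : (Finset.image (fun x : F => x^(2^m)+x) univ).card ≤ K.card :=
    Finset.card_le_card himsub
  have hKcard : K.card = 2^m := by
    by_contra hne
    have hlt : K.card < 2^m := lt_of_le_of_ne hKle hne
    have : (univ : Finset F).card < 2^m * 2^m := by
      calc (univ : Finset F).card = _ * K.card := hsum
        _ ≤ K.card * K.card := Nat.mul_le_mul_right _ himle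
        _ < 2^m * 2^m := Nat.mul_lt_mul_of_lt_of_le hlt (le_of_lt hlt) (by positivity)
    omega
  have himcard : (Finset.image (fun x : F => x^(2^m)+x) univ).card = 2^m := by
    have h0 : (2:ℕ)^m ≠ 0 := by positivity
    have := hsum
    rw [hKcard, hFcard] at this
    exact Nat.eq_of_mul_eq_mul_right (by positivity) this.symm
  have himeq : Finset.image (fun x : F => x^(2^m)+x) univ = K := by
    apply Finset.eq_of_subset_of_card_le himsub
    rw [himcard, hKcard]
  refine ⟨hKcard, fun y hy => ?_⟩
  have hyK : y ∈ K := by rw [hK, mem_filter]; exact ⟨mem_univ _, hy⟩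
  rw [← himeq, Finset.mem_image] at hyK
  obtain ⟨x₀, _, rfl⟩ := hyK
  rw [hfib x₀, hKcard]

lemma cardS' (hm : 0 < m) (hmeven : Even m) (hcard : Fintype.card F = 2 ^ (2*m))
    (δ : F) (hδ : T m (δ^(2^m)+δ) = 1) (f : F → F)
    (hf : ∀ x, f x = (x ^ 2 + x + δ) ^ (2 ^ m + 1) + x) :
    (univ.filter (fun p : F × F => p.2 ≠ 0 ∧ f (p.1+p.2) = f p.1)).card = 2^(2*m) := by
  have h2 : (2:F) = 0 := CharTwo.two_eq_zero
  have pw : ∀ u : F, (u^(2^m))^(2^m) = u := powpow m hcard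
  obtain ⟨hKcard, hfib⟩ := Lfiber_card m hm hcard
  set T' := univ.filter (fun p : F × F => (p.2)^(2^m) = p.2 ∧
      p.2 + ((p.2)^2 + p.2 + (δ^(2^m)+δ))⁻¹ = p.1^(2^m)+p.1) with hT'
  have hST : (univ.filter (fun p : F × F => p.2 ≠ 0 ∧ f (p.1+p.2) = f p.1)).card = T'.card := by
    apply Finset.card_nbij' (fun p => (p.1, p.1^(2^m)+p.1+p.2+1))
      (fun p => (p.1, p.1^(2^m)+p.1+p.2+1))
    · rintro ⟨x, a⟩ hp
      simp only [Finset.mem_coe, mem_filter, mem_univ, true_and] at hp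
      rw [Finset.mem_coe, hT', mem_filter]
      exact ⟨mem_univ _, (key_iff m hcard hmeven δ hδ f hf x a).mp hp⟩
    · rintro ⟨x, w⟩ hp
      rw [Finset.mem_coe, hT', mem_filter] at hp
      simp only [Finset.mem_coe, mem_filter, mem_univ, true_and]
      have hE : x^(2^m)+x+(x^(2^m)+x+w+1)+1 = w := by
        linear_combination (x^(2^m)+x+1)*h2
      refine (key_iff m hcard hmeven δ hδ f hf x _).mpr ?_
      rw [hE]
      exact hp.2
    · rintro ⟨x, a⟩ _
      simp only [Prod.mk.injEq]
      exact ⟨trivial, by linear_combination (x^(2^m)+x+1)*h2⟩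
    · rintro ⟨x, w⟩ _
      simp only [Prod.mk.injEq]
      exact ⟨trivial, by linear_combination (x^(2^m)+x+1)*h2⟩
  rw [hST]
  have hpart := Finset.card_eq_sum_card_fiberwise
    (f := fun p : F × F => p.2) (s := T') (t := univ.filter (fun w : F => w^(2^m) = w))
    (by
      intro p hp
      rw [Finset.mem_coe, hT', mem_filter] at hp
      rw [Finset.mem_coe, mem_filter]
      exact ⟨mem_univ _, hp.2.1⟩)
  rw [hpart]
  have hsummand : ∀ w ∈ univ.filter (fun w : F => w^(2^m) = w),
      (T'.filter (fun p : F × F => p.2 = w)).card = 2^m := by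
    intro w hw
    rw [mem_filter] at hw
    have hwq := hw.2
    have hu : (w^2+w+(δ^(2^m)+δ))^(2^m) = w^2+w+(δ^(2^m)+δ) := by
      rw [frobq, frobq, frobq, pow_right_comm, hwq, pw]; ring
    have hy : (w + (w^2+w+(δ^(2^m)+δ))⁻¹)^(2^m) = w + (w^2+w+(δ^(2^m)+δ))⁻¹ := by
      rw [frobq, inv_pow, hu, hwq]
    have hcount := hfib _ hy
    rw [← hcount]
    apply Finset.card_nbij' (fun p => p.1) (fun x => (x, w))
    · rintro ⟨x, w'⟩ hp
      rw [Finset.mem_coe, mem_filter, hT', mem_filter] at hp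
      obtain ⟨⟨-, -, hp2⟩, hp3⟩ := hp
      simp only at hp3
      subst hp3
      simp only [Finset.mem_coe, mem_filter, mem_univ, true_and]
      exact hp2.symm
    · intro x hx
      simp only [Finset.mem_coe, mem_filter, mem_univ, true_and] at hx
      rw [Finset.mem_coe, mem_filter, hT', mem_filter]
      exact ⟨⟨mem_univ _, hwq, hx.symm⟩, rfl⟩
    · rintro ⟨x, w'⟩ hp
      rw [Finset.mem_coe, mem_filter] at hp
      have := hp.2
      simp only at this
      subst this
      rfl
    · intro x _; rfl
  rw [Finset.sum_congr rfl hsummand, Finset.sum_const, smul_eq_mul, hKcard,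
    ← pow_add, two_mul]

end CharTwo

end Stmt10Aux

/-- For even `m` and `Tr_{2m}(δ) = 1`, `f(x) = (x²+x+δ)^{2^m+1} + x` is 2-to-1 on
`F_{2^{2m}}`. -/
theorem stmt10 {F : Type*} [Field F] [Fintype F] [DecidableEq F] (m : ℕ)
    (hm : 0 < m) (hmeven : Even m)
    (hcard : Fintype.card F = 2 ^ (2 * m))
    (δ : F) (htr : ∑ i ∈ Finset.range (2 * m), δ ^ (2 ^ i) = 1)
    (f : F → F)
    (hf : ∀ x, f x = (x ^ 2 + x + δ) ^ (2 ^ m + 1) + x) :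
    ∀ b : F, (Finset.univ.filter (fun x : F => f x = b)).card = 2 ∨
             (Finset.univ.filter (fun x : F => f x = b)).card = 0 := by
  haveI : CharP F 2 := Stmt10Aux.charF hcard
  have h2 : (2:F) = 0 := CharTwo.two_eq_zero
  have hδ : Stmt10Aux.T m (δ^(2^m)+δ) = 1 := Stmt10Aux.Tdelta m δ htr
  set S' := Finset.univ.filter (fun p : F × F => p.2 ≠ 0 ∧ f (p.1+p.2) = f p.1) with hS'
  have hcardS' : S'.card = 2^(2*m) := Stmt10Aux.cardS' m hm hmeven hcard δ hδ f hf
  have hinj : Set.InjOn Prod.fst (S' : Set (F×F)) := by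
    rintro ⟨x1,a1⟩ hp1 ⟨x2,a2⟩ hp2 hfst
    simp only [hS', Finset.coe_filter, Set.mem_setOf_eq, Finset.mem_univ, true_and] at hp1 hp2
    simp only at hfst
    subst hfst
    have := Stmt10Aux.unique m hcard hmeven δ hδ f hf x1 a1 a2 hp1.1 hp2.1 hp1.2 hp2.2
    rw [this]
  have himg : Finset.image Prod.fst S' = Finset.univ := by
    apply Finset.eq_univ_of_card
    rw [Finset.card_image_of_injOn hinj, hcardS', hcard]
  have hex : ∀ x : F, ∃ a : F, a ≠ 0 ∧ f (x+a) = f x := by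
    intro x
    have hx : x ∈ Finset.image Prod.fst S' := by rw [himg]; exact Finset.mem_univ x
    rw [Finset.mem_image] at hx
    obtain ⟨⟨x', a⟩, hpS, rfl⟩ := hx
    rw [hS', Finset.mem_filter] at hpS
    exact ⟨a, hpS.2⟩
  intro b
  by_cases hb : (Finset.univ.filter (fun x : F => f x = b)).Nonempty
  · left
    obtain ⟨x, hx⟩ := hb
    rw [Finset.mem_filter] at hx
    obtain ⟨a, ha0, hfa⟩ := hex x
    have hset : Finset.univ.filter (fun x : F => f x = b) = {x, x+a} := by
      ext y
      simp only [Finset.mem_filter, Finset.mem_univ, true_and, Finset.mem_insert,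
        Finset.mem_singleton]
      constructor
      · intro hy
        by_cases hyx : y = x
        · left; exact hyx
        · right
          have hxy : x + (x + y) = y := by linear_combination x*h2
          have hne : x + y ≠ 0 := by
            intro h0; exact hyx (by linear_combination -h0 + y*h2)
          have huniq := Stmt10Aux.unique m hcard hmeven δ hδ f hf x a (x+y) ha0 hne hfa
            (by rw [hxy, hy, hx.2])
          rw [← huniq] at hxy
          exact hxy.symm
      · intro hy
        rcases hy with rfl | rfl
        · exact hx.2
        · rw [hfa]; exact hx.2
    rw [hset, Finset.card_insert_of_notMem, Finset.card_singleton]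
    simp only [Finset.mem_singleton]
    intro hxx
    exact ha0 (by linear_combination -hxx)
  · right
    rw [Finset.not_nonempty_iff_eq_empty] at hb
    rw [hb]
    rfl
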